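/- Let n be a positive integer, a = (a_1,...,a_n) and b = (b_1,...,b_n) be n-tuples of complex numbers with b_k ≠ 0 for all k, and p = (p_1,...,p_n) nonnegative real weights with ∑_{i=1}^n p_i = 1. Suppose there exist α ∈ ℂ and r > 0 with |α| > r such that a_k / conj(b_k) ∈ D̄(α,r) for every k ∈ {1,...,n}. Then (∑_{k=1}^n p_k |a_k|^2)(∑_{k=1}^n p_k |b_k|^2) ≤ (1/(|α|^2 - r^2)) · ( Re[ conj(α) · ∑_{k=1}^n p_k a_k b_k ] )^2 ≤ (|α|^2/(|α|^2 - r^2)) · | ∑_{k=1}^n p_k a_k b_k |^2. -/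

import Mathlib

theorem stmt_1 (n : ℕ) (hn : 0 < n) (a b : Fin n → ℂ) (p : Fin n → ℝ)
    (hb : ∀ k, b k ≠ 0) (hp : ∀ k, 0 ≤ p k) (hp1 : ∑ i, p i = 1)
    (α : ℂ) (r : ℝ) (hr : 0 < r) (hαr : r < ‖α‖)
    (h : ∀ k, ‖a k / (starRingEnd ℂ) (b k) - α‖ ≤ r) :
    (∑ k, p k * ‖a k‖ ^ 2) * (∑ k, p k * ‖b k‖ ^ 2)
      ≤ (1 / (‖α‖ ^ 2 - r ^ 2))
        * ((starRingEnd ℂ) α * ∑ k, (p k : ℂ) * a k * b k).re ^ 2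
    ∧ (1 / (‖α‖ ^ 2 - r ^ 2))
        * ((starRingEnd ℂ) α * ∑ k, (p k : ℂ) * a k * b k).re ^ 2
      ≤ (‖α‖ ^ 2 / (‖α‖ ^ 2 - r ^ 2))
        * ‖∑ k, (p k : ℂ) * a k * b k‖ ^ 2 := by
  set c : ℝ := ‖α‖ ^ 2 - r ^ 2 with hc_def
  have hc : 0 < c := by
    have : 0 ≤ ‖α‖ := norm_nonneg _
    nlinarith
  set s : ℂ := ∑ k, (p k : ℂ) * a k * b k with hs_def
  set R : ℝ := ((starRingEnd ℂ) α * s).re with hR_def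
  -- pointwise key inequality
  have key : ∀ k, ‖a k‖ ^ 2 + c * ‖b k‖ ^ 2
      ≤ 2 * ((starRingEnd ℂ) α * (a k * b k)).re := by
    intro k
    have hbk : (starRingEnd ℂ) (b k) ≠ 0 := by
      simpa using hb k
    have h1 : ‖a k - α * (starRingEnd ℂ) (b k)‖ ≤ r * ‖b k‖ := by
      have heq : a k - α * (starRingEnd ℂ) (b k)
          = (a k / (starRingEnd ℂ) (b k) - α) * (starRingEnd ℂ) (b k) := by
        field_simp
      rw [heq, norm_mul, Complex.norm_conj]
      exact mul_le_mul_of_nonneg_right (h k) (norm_nonneg _)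
    have h2 : Complex.normSq (a k - α * (starRingEnd ℂ) (b k))
        ≤ (r * ‖b k‖) ^ 2 := by
      rw [← Complex.sq_norm]
      exact pow_le_pow_left₀ (norm_nonneg _) h1 2
    have h3 : Complex.normSq (a k - α * (starRingEnd ℂ) (b k))
        = Complex.normSq (a k) + Complex.normSq α * Complex.normSq (b k)
          - 2 * ((starRingEnd ℂ) α * (a k * b k)).re := by
      rw [Complex.normSq_sub]
      have heq2 : (a k * (starRingEnd ℂ) (α * (starRingEnd ℂ) (b k)))
          = (starRingEnd ℂ) α * (a k * b k) := by
        rw [map_mul]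
        simp only [Complex.conj_conj]
        ring
      rw [heq2, Complex.normSq_mul, Complex.normSq_conj]
    rw [h3] at h2
    have ha2 : ‖a k‖ ^ 2 = Complex.normSq (a k) := Complex.sq_norm _
    have hb2 : ‖b k‖ ^ 2 = Complex.normSq (b k) := Complex.sq_norm _
    have hα2 : ‖α‖ ^ 2 = Complex.normSq α := Complex.sq_norm _
    rw [ha2, hb2, hc_def, hα2]
    nlinarith [h2]
  -- express R as a sum
  have hR : R = ∑ k, p k * ((starRingEnd ℂ) α * (a k * b k)).re := by
    rw [hR_def, hs_def, Finset.mul_sum, Complex.re_sum]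
    refine Finset.sum_congr rfl fun k _ => ?_
    have hmul : (starRingEnd ℂ) α * ((p k : ℂ) * a k * b k)
        = (p k : ℂ) * ((starRingEnd ℂ) α * (a k * b k)) := by ring
    rw [hmul, Complex.re_ofReal_mul]
  set Sa : ℝ := ∑ k, p k * ‖a k‖ ^ 2 with hSa_def
  set Sb : ℝ := ∑ k, p k * ‖b k‖ ^ 2 with hSb_def
  have hSa0 : 0 ≤ Sa :=
    Finset.sum_nonneg fun k _ => mul_nonneg (hp k) (sq_nonneg _)
  have hSb0 : 0 ≤ Sb :=
    Finset.sum_nonneg fun k _ => mul_nonneg (hp k) (sq_nonneg _)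
  have hsum : Sa + c * Sb ≤ 2 * R := by
    have step1 : ∀ k ∈ Finset.univ,
        p k * ‖a k‖ ^ 2 + c * (p k * ‖b k‖ ^ 2)
          ≤ 2 * (p k * ((starRingEnd ℂ) α * (a k * b k)).re) := fun k _ => by
      nlinarith [mul_le_mul_of_nonneg_left (key k) (hp k)]
    have h6 := Finset.sum_le_sum step1
    rw [Finset.sum_add_distrib, ← Finset.mul_sum, ← Finset.mul_sum] at h6
    rw [← hR] at h6
    exact h6
  clear_value s R Sa Sb c
  constructor
  · have h4 : Sa * Sb * c ≤ R ^ 2 := by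
      have hpos : 0 ≤ Sa + c * Sb := add_nonneg hSa0 (mul_nonneg hc.le hSb0)
      have h5 : (Sa + c * Sb) ^ 2 ≤ (2 * R) ^ 2 := by
        apply pow_le_pow_left₀ hpos hsum
      nlinarith [h5, sq_nonneg (Sa - c * Sb)]
    have := (le_div_iff₀ hc).mpr h4
    calc Sa * Sb ≤ R ^ 2 / c := this
      _ = 1 / c * R ^ 2 := by ring
  · have hR2 : R ^ 2 ≤ ‖α‖ ^ 2 * ‖s‖ ^ 2 := by
      have h3 : |R| ≤ ‖α‖ * ‖s‖ := by
        rw [hR_def]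
        calc |((starRingEnd ℂ) α * s).re| ≤ ‖(starRingEnd ℂ) α * s‖ :=
              Complex.abs_re_le_norm _
          _ = ‖α‖ * ‖s‖ := by rw [norm_mul, Complex.norm_conj]
      calc R ^ 2 = |R| ^ 2 := (sq_abs R).symm
        _ ≤ (‖α‖ * ‖s‖) ^ 2 :=
            pow_le_pow_left₀ (abs_nonneg _) h3 2
        _ = ‖α‖ ^ 2 * ‖s‖ ^ 2 := by ring
    calc 1 / c * R ^ 2 ≤ 1 / c * (‖α‖ ^ 2 * ‖s‖ ^ 2) := by
          have : (0:ℝ) ≤ 1 / c := by positivity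
          exact mul_le_mul_of_nonneg_left hR2 this
      _ = ‖α‖ ^ 2 / c * ‖s‖ ^ 2 := by ring
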